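/- Let (R, m) be a Noetherian local ring of dimension d and characteristic p > 0 with a test element, I an m-primary ideal, and (I_q)_q a family of ideals indexed by powers q of p satisfying I^{[q]} ⊆ I_q ⊆ (I^{[q]})*. Then lim_{q→∞} (1/q^d) · length(R/I_q) = e_HK(I). -/

import Mathlib

open Filter IsLocalRing

noncomputable section

variable {R : Type*} [CommRing R]

/-- The `q`-th Frobenius power `I^{[q]}` of an ideal `I`. -/
def fpow (I : Ideal R) (q : ℕ) : Ideal R := Ideal.span ((fun x => x ^ q) '' (I : Set R))

/-- The length of `R ⧸ I` as an `R`-module, as a natural number. -/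
def qlen (I : Ideal R) : ℕ := (WithBot.unbotD 0 (Order.krullDim (Submodule R (R ⧸ I)))).toNat

/-- The length of `R ⧸ I` as an `R`-module, in `ℕ∞`. -/
def lenE (I : Ideal R) : ℕ∞ := WithBot.unbotD 0 (Order.krullDim (Submodule R (R ⧸ I)))

/-- The tight closure `I*` of an ideal `I` in a ring of characteristic `p`. -/
def tightClosure (p : ℕ) (I : Ideal R) : Ideal R :=
  Ideal.span {x | ∃ c : R, (∀ P ∈ minimalPrimes R, c ∉ P) ∧
    ∃ e₀ : ℕ, ∀ e ≥ e₀, c * x ^ p ^ e ∈ fpow I (p ^ e)}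

/-- `c` is a test element: `c` avoids all minimal primes and for every ideal `I`,
`x ∈ I*` iff `c x^q ∈ I^{[q]}` for all `q = p^e`. -/
def IsTestElement (p : ℕ) (c : R) : Prop :=
  (∀ P ∈ minimalPrimes R, c ∉ P) ∧
    ∀ (I : Ideal R) (x : R), x ∈ tightClosure p I ↔ ∀ e : ℕ, c * x ^ p ^ e ∈ fpow I (p ^ e)

end

section ChainBound

/-- Every `LTSeries` in `α` has length at most `n`. -/
def ChainBnd (α : Type*) [Preorder α] (n : ℕ) : Prop :=
  ∀ l : LTSeries α, l.length ≤ n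

lemma chainBnd_of_orderIso {α β : Type*} [Preorder α] [Preorder β] (f : α ≃o β) {n : ℕ}
    (h : ChainBnd α n) : ChainBnd β n := by
  intro l
  have := h (l.map f.symm f.symm.strictMono)
  simpa using this

lemma height_le_of_chainBnd {α : Type*} [Preorder α] {n : ℕ} (h : ChainBnd α n) (x : α) :
    Order.height x ≤ (n : ℕ∞) :=
  Order.height_le fun p _ => by exact_mod_cast h p

lemma chainBnd_subadd {α : Type*} [Lattice α] [IsModularLattice α] (N : α) {a b : ℕ}
    (ha : ChainBnd {x : α // x ≤ N} a) (hb : ChainBnd {x : α // N ≤ x} b) :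
    ChainBnd α (a + b) := by
  intro l
  set A : Fin (l.length + 1) → {x : α // x ≤ N} := fun i => ⟨l i ⊓ N, inf_le_right⟩ with hA
  set B : Fin (l.length + 1) → {x : α // N ≤ x} := fun i => ⟨l i ⊔ N, le_sup_right⟩ with hB
  have hAm : Monotone A := fun i j hij => by
    simp only [hA, Subtype.mk_le_mk]
    exact inf_le_inf_right N (l.monotone hij)
  have hBm : Monotone B := fun i j hij => by
    simp only [hB, Subtype.mk_le_mk]
    exact sup_le_sup_right (l.monotone hij) N
  have key : ∀ i : Fin (l.length + 1),
      (i : ℕ∞) ≤ Order.height (A i) + Order.height (B i) := by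
    intro i
    induction i using Fin.induction with
    | zero => simp
    | succ i ih =>
      have hlt : l i.castSucc < l i.succ := l.strictMono (Fin.castSucc_lt_succ (i := i))
      by_cases hinf : A i.castSucc < A i.succ
      · have h1 : Order.height (A i.castSucc) < Order.height (A i.succ) :=
          Order.height_strictMono hinf
            (lt_of_le_of_lt (height_le_of_chainBnd ha _) (by simp))
        have h2 : Order.height (A i.castSucc) + 1 ≤ Order.height (A i.succ) :=
          ENat.add_one_le_iff (ne_top_of_le_ne_top (by simp)
            (height_le_of_chainBnd ha _)) |>.mpr h1
        calc (i.succ : ℕ∞) = (i.castSucc : ℕ∞) + 1 := by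
              push_cast [Fin.val_succ, Fin.coe_castSucc]; ring
          _ ≤ (Order.height (A i.castSucc) + Order.height (B i.castSucc)) + 1 :=
              add_le_add_left ih 1
          _ = (Order.height (A i.castSucc) + 1) + Order.height (B i.castSucc) := by ring
          _ ≤ Order.height (A i.succ) + Order.height (B i.succ) :=
              add_le_add h2 (Order.height_mono (hBm (le_of_lt (Fin.castSucc_lt_succ (i := i)))))
      · -- then the sup part strictly increases, by modularity
        have heq : (l i.castSucc) ⊓ N = (l i.succ) ⊓ N := by
          have hle : A i.castSucc ≤ A i.succ := hAm (le_of_lt (Fin.castSucc_lt_succ (i := i)))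
          have := eq_of_le_of_not_lt hle hinf
          simpa [hA, Subtype.ext_iff] using this
        have hsup : (l i.castSucc) ⊔ N < (l i.succ) ⊔ N :=
          sup_lt_sup_of_lt_of_inf_le_inf hlt (le_of_eq heq.symm)
        have hBlt : B i.castSucc < B i.succ := by
          simpa [hB, Subtype.mk_lt_mk] using hsup
        have h1 : Order.height (B i.castSucc) < Order.height (B i.succ) :=
          Order.height_strictMono hBlt
            (lt_of_le_of_lt (height_le_of_chainBnd hb _) (by simp))
        have h2 : Order.height (B i.castSucc) + 1 ≤ Order.height (B i.succ) :=
          ENat.add_one_le_iff (ne_top_of_le_ne_top (by simp)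
            (height_le_of_chainBnd hb _)) |>.mpr h1
        calc (i.succ : ℕ∞) = (i.castSucc : ℕ∞) + 1 := by
              push_cast [Fin.val_succ, Fin.coe_castSucc]; ring
          _ ≤ (Order.height (A i.castSucc) + Order.height (B i.castSucc)) + 1 :=
              add_le_add_left ih 1
          _ = Order.height (A i.castSucc) + (Order.height (B i.castSucc) + 1) := by ring
          _ ≤ Order.height (A i.succ) + Order.height (B i.succ) :=
              add_le_add (Order.height_mono (hAm (le_of_lt (Fin.castSucc_lt_succ (i := i))))) h2
  have := key (Fin.last _)
  have hfin : (l.length : ℕ∞) ≤ (a : ℕ∞) + (b : ℕ∞) := by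
    refine le_trans ?_ (add_le_add (height_le_of_chainBnd ha (A (Fin.last _)))
      (height_le_of_chainBnd hb (B (Fin.last _))))
    simpa [Fin.val_last] using this
  exact_mod_cast hfin

end ChainBound

section ModBound

open IsLocalRing

variable {R : Type*} [CommRing R]

abbrev mChB (R : Type*) [CommRing R] (M : Type*) [AddCommGroup M] [Module R M] (n : ℕ) : Prop :=
  ChainBnd (Submodule R M) n

lemma chainBnd_zero_of_subsingleton {α : Type*} [Preorder α] [Subsingleton α] : ChainBnd α 0 := by
  intro l
  by_contra h
  push_neg at h
  have h1 : (⟨0, by omega⟩ : Fin (l.length + 1)) < ⟨1, by omega⟩ := by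
    rw [Fin.mk_lt_mk]; omega
  have := l.strictMono h1
  rw [Subsingleton.elim (l ⟨0, by omega⟩) (l ⟨1, by omega⟩)] at this
  exact lt_irrefl _ this

lemma mChB_of_linearEquiv {M N : Type*} [AddCommGroup M] [Module R M] [AddCommGroup N]
    [Module R N] (e : M ≃ₗ[R] N) {n : ℕ} (h : mChB R M n) : mChB R N n :=
  chainBnd_of_orderIso (Submodule.orderIsoMapComap e) h

lemma mChB_subsingleton {M : Type*} [AddCommGroup M] [Module R M] (h : ∀ x : M, x = 0) :
    mChB R M 0 := by
  have : Subsingleton (Submodule R M) := by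
    constructor
    intro a b
    ext x
    rw [h x]
    simp
  exact chainBnd_zero_of_subsingleton

lemma mChB_one_of_cyclic [IsLocalRing R] {M : Type*} [AddCommGroup M] [Module R M] (x : M)
    (hgen : Submodule.span R {x} = ⊤)
    (hkill : ∀ r ∈ maximalIdeal R, ∀ y : M, r • y = 0) : mChB R M 1 := by
  have hP : ∀ P : Submodule R M, P = ⊥ ∨ P = ⊤ := by
    intro P
    by_cases h : P = ⊥
    · exact Or.inl h
    right
    obtain ⟨y, hyP, hy0⟩ := (Submodule.ne_bot_iff P).mp h
    have hy : y ∈ Submodule.span R {x} := by rw [hgen]; trivial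
    obtain ⟨r, hr⟩ := Submodule.mem_span_singleton.mp hy
    have hrm : r ∉ maximalIdeal R := fun hm => hy0 (by rw [← hr]; exact hkill r hm x)
    have hu : IsUnit r := by
      by_contra hnu
      exact hrm ((IsLocalRing.mem_maximalIdeal r).mpr hnu)
    obtain ⟨u, rfl⟩ := hu
    have hx : x ∈ P := by
      have h2 : (u⁻¹ : Rˣ) • ((u : R) • x) ∈ P := Submodule.smul_mem _ _ (hr ▸ hyP)
      rwa [← Units.smul_def, inv_smul_smul] at h2
    rw [eq_top_iff, ← hgen, Submodule.span_le]
    simpa using hx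
  intro l
  by_contra hlen
  push_neg at hlen
  have h01 : l ⟨0, by omega⟩ < l ⟨1, by omega⟩ := l.strictMono (by rw [Fin.mk_lt_mk]; omega)
  have h12 : l ⟨1, by omega⟩ < l ⟨2, by omega⟩ := l.strictMono (by rw [Fin.mk_lt_mk]; omega)
  rcases hP (l ⟨1, by omega⟩) with h | h
  · rw [h] at h01; exact not_lt_bot h01
  · rw [h] at h12; exact not_top_lt h12



lemma mChB_subadd {M : Type*} [AddCommGroup M] [Module R M] (N : Submodule R M) {a b : ℕ}
    (hN : mChB R (↥N) a) (hQ : mChB R (M ⧸ N) b) : mChB R M (a + b) := by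
  refine chainBnd_subadd N ?_ ?_
  · exact chainBnd_of_orderIso (Submodule.MapSubtype.orderIso N) hN
  · exact chainBnd_of_orderIso (Submodule.comapMkQRelIso N) hQ

universe v

lemma mChB_of_list [IsLocalRing R] :
    ∀ (n : ℕ) (M : Type v) (_ : AddCommGroup M) (_ : Module R M) (L : List M),
      L.length = n → Submodule.span R {y | y ∈ L} = ⊤ →
      (∀ r ∈ maximalIdeal R, ∀ y : M, r • y = 0) → mChB R M n := by
  intro n
  induction n with
  | zero =>
    intro M _ _ L hL hspan hkill
    rw [List.length_eq_zero_iff] at hL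
    subst hL
    refine mChB_subsingleton fun x => ?_
    have hx : x ∈ Submodule.span R {y : M | y ∈ ([] : List M)} := by rw [hspan]; trivial
    simpa [Submodule.span_le] using hx
  | succ n ih =>
    intro M _ _ L hL hspan hkill
    obtain ⟨x, L', rfl⟩ : ∃ x L', L = x :: L' := by
      cases L with
      | nil => simp at hL
      | cons a l => exact ⟨a, l, rfl⟩
    set N : Submodule R M := Submodule.span R {x} with hNdef
    have h1 : mChB R (↥N) 1 := by
      refine mChB_one_of_cyclic ⟨x, Submodule.mem_span_singleton_self x⟩ ?_ ?_
      · ext ⟨y, hy⟩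
        simp only [Submodule.mem_top, iff_true]
        obtain ⟨r, hr⟩ := Submodule.mem_span_singleton.mp hy
        exact Submodule.mem_span_singleton.mpr ⟨r, Subtype.ext hr⟩
      · intro r hr y
        exact Subtype.ext (by simpa using hkill r hr (y : M))
    have h2 : mChB R (M ⧸ N) n := by
      refine ih (M ⧸ N) _ _ (L'.map N.mkQ) (by simpa using hL) ?_ ?_
      · have : {y : M ⧸ N | y ∈ L'.map N.mkQ} = N.mkQ '' {y : M | y ∈ L'} := by
          ext z; simp [List.mem_map]
        rw [this, Submodule.span_image]
        have htop : Submodule.span R {y : M | y ∈ x :: L'} = N ⊔ Submodule.span R {y | y ∈ L'} := by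
          rw [hNdef, ← Submodule.span_union]
          congr 1
          ext z; simp [List.mem_cons]
        have : Submodule.map N.mkQ (N ⊔ Submodule.span R {y | y ∈ L'}) = ⊤ := by
          rw [← htop, hspan, Submodule.map_top, Submodule.range_mkQ]
        have hbot : Submodule.map N.mkQ N = ⊥ := by
          rw [eq_bot_iff]
          rintro z ⟨y, hyN, rfl⟩
          simpa using (Submodule.Quotient.mk_eq_zero N).mpr hyN
        rwa [Submodule.map_sup, hbot, bot_sup_eq] at this
      · intro r hr y
        obtain ⟨z, rfl⟩ := Submodule.mkQ_surjective N y
        rw [← map_smul, hkill r hr z, map_zero]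
    simpa [Nat.add_comm] using mChB_subadd N h1 h2

lemma mChB_of_fg_killed [IsLocalRing R] {M : Type v} [AddCommGroup M] [Module R M]
    (hfg : (⊤ : Submodule R M).FG)
    (hkill : ∀ r ∈ maximalIdeal R, ∀ y : M, r • y = 0) : ∃ n, mChB R M n := by
  obtain ⟨S, hS⟩ := hfg
  refine ⟨S.toList.length, mChB_of_list _ M _ _ S.toList rfl ?_ hkill⟩
  rw [show {y : M | y ∈ S.toList} = (S : Set M) by ext z; simp]
  exact hS

end ModBound

section IdealLevel

variable {R : Type*} [CommRing R]

lemma toNat_unbot'_le {x : WithBot ℕ∞} {n : ℕ} (h : x ≤ ((n : ℕ∞) : WithBot ℕ∞)) :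
    (WithBot.unbotD 0 x).toNat ≤ n := by
  induction x using WithBot.recBotCoe with
  | bot => simp
  | coe a =>
    rw [WithBot.unbotD_coe]
    have ha : a ≤ (n : ℕ∞) := by exact_mod_cast h
    cases a with
    | top => simp at ha
    | coe m => simpa using ha

lemma repr_of_bounded {x : WithBot ℕ∞} {n : ℕ} (h0 : 0 ≤ x) (h : x ≤ ((n : ℕ∞) : WithBot ℕ∞)) :
    x = (((WithBot.unbotD 0 x).toNat : ℕ∞) : WithBot ℕ∞) := by
  induction x using WithBot.recBotCoe with
  | bot => simp at h0
  | coe a =>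
    rw [WithBot.unbotD_coe]
    have ha : a ≤ (n : ℕ∞) := by exact_mod_cast h
    cases a with
    | top =>
      exfalso
      exact (lt_irrefl (⊤ : ℕ∞)) (lt_of_le_of_lt ha (ENat.coe_lt_top n))
    | coe m => simp

lemma qlen_le_of_mChB {A : Ideal R} {n : ℕ} (h : mChB R (R ⧸ A) n) : qlen A ≤ n := by
  unfold qlen
  refine toNat_unbot'_le (iSup_le fun l => ?_)
  exact_mod_cast h l

lemma mChB_qlen {A : Ideal R} {n : ℕ} (h : mChB R (R ⧸ A) n) : mChB R (R ⧸ A) (qlen A) := by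
  intro l
  have h1 : (l.length : WithBot ℕ∞) ≤ Order.krullDim (Submodule R (R ⧸ A)) :=
    Order.LTSeries.length_le_krullDim l
  have h2 : Order.krullDim (Submodule R (R ⧸ A)) ≤ ((n : ℕ∞) : WithBot ℕ∞) :=
    iSup_le fun p => by exact_mod_cast h p
  have h0 : 0 ≤ Order.krullDim (Submodule R (R ⧸ A)) := Order.krullDim_nonneg
  have := repr_of_bounded h0 h2
  rw [this] at h1
  unfold qlen
  exact_mod_cast h1

lemma mChB_quot {M : Type*} [AddCommGroup M] [Module R M] (N : Submodule R M) {n : ℕ}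
    (h : mChB R M n) : mChB R (M ⧸ N) n := by
  intro l
  simpa using
    h (l.map (Submodule.comapMkQOrderEmbedding N) (Submodule.comapMkQOrderEmbedding N).strictMono)

lemma mChB_mono {A B : Ideal R} (hAB : A ≤ B) {n : ℕ} (h : mChB R (R ⧸ A) n) :
    mChB R (R ⧸ B) n := by
  have h1 : mChB R ((R ⧸ A) ⧸ (Submodule.map A.mkQ B)) n := mChB_quot _ h
  exact mChB_of_linearEquiv (Submodule.quotientQuotientEquivQuotient A B hAB) h1

/-- the ideal `(J : c)`. -/
def colonC (J : Ideal R) (c : R) : Ideal R :=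
  Submodule.comap (LinearMap.toSpanSingleton R R c) J

lemma mem_colonC {J : Ideal R} {c x : R} : x ∈ colonC J c ↔ x * c ∈ J := by
  simp [colonC, LinearMap.toSpanSingleton, smul_eq_mul]

lemma le_colonC {J : Ideal R} {c : R} : J ≤ colonC J c := fun x hx =>
  mem_colonC.mpr (Ideal.mul_mem_right c J hx)

lemma mChB_colon_split (J : Ideal R) (c : R) {a b : ℕ}
    (ha : mChB R (R ⧸ (colonC J c)) a) (hb : mChB R (R ⧸ (J ⊔ Ideal.span {c})) b) :
    mChB R (R ⧸ J) (a + b) := by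
  set f : R →ₗ[R] R ⧸ J := J.mkQ.comp (LinearMap.toSpanSingleton R R c) with hf
  have hker : LinearMap.ker f = colonC J c := by
    rw [hf, LinearMap.ker_comp, Submodule.ker_mkQ]
    rfl
  have hrange : LinearMap.range f = Submodule.map J.mkQ (J ⊔ Ideal.span {c}) := by
    rw [hf, LinearMap.range_comp, ← LinearMap.span_singleton_eq_range, Submodule.map_sup]
    have hbot : Submodule.map J.mkQ J = ⊥ := by
      rw [eq_bot_iff]
      rintro z ⟨y, hyJ, rfl⟩
      simpa using (Submodule.Quotient.mk_eq_zero J).mpr hyJ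
    rw [hbot, bot_sup_eq]
  have hN : mChB R (↥(LinearMap.range f)) a := by
    refine mChB_of_linearEquiv (f.quotKerEquivRange) ?_
    exact mChB_of_linearEquiv (Submodule.quotEquivOfEq _ _ hker.symm) ha
  have hQ : mChB R ((R ⧸ J) ⧸ (LinearMap.range f)) b := by
    refine mChB_of_linearEquiv ?_ hb
    exact ((Submodule.quotEquivOfEq _ _ hrange).trans
      (Submodule.quotientQuotientEquivQuotient J (J ⊔ Ideal.span {c}) le_sup_left)).symm
  exact mChB_subadd _ hN hQ

lemma qlen_mono {A B : Ideal R} (hAB : A ≤ B) {n : ℕ} (h : mChB R (R ⧸ A) n) :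
    qlen B ≤ qlen A :=
  qlen_le_of_mChB (mChB_mono hAB (mChB_qlen h))

lemma qlen_colon_split (J : Ideal R) (c : R) {n : ℕ} (h : mChB R (R ⧸ J) n) :
    qlen J ≤ qlen (colonC J c) + qlen (J ⊔ Ideal.span {c}) := by
  have h1 : mChB R (R ⧸ (colonC J c)) n := mChB_mono le_colonC h
  have h2 : mChB R (R ⧸ (J ⊔ Ideal.span {c})) n := mChB_mono le_sup_left h
  exact qlen_le_of_mChB (mChB_colon_split J c (mChB_qlen h1) (mChB_qlen h2))

end IdealLevel

section Fin

variable {R : Type*} [CommRing R] [IsNoetherianRing R] [IsLocalRing R]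

lemma mChB_top_zero : mChB R (R ⧸ (⊤ : Ideal R)) 0 := by
  refine mChB_subsingleton fun x => ?_
  obtain ⟨r, rfl⟩ := Submodule.mkQ_surjective (⊤ : Ideal R) x
  simpa using (Submodule.Quotient.mk_eq_zero (⊤ : Ideal R)).mpr trivial

lemma qlen_top : qlen (⊤ : Ideal R) = 0 :=
  Nat.le_zero.mp (qlen_le_of_mChB mChB_top_zero)

lemma finLen_of_pow_le :
    ∀ (k : ℕ) (A : Ideal R), maximalIdeal R ^ k ≤ A → ∃ n, mChB R (R ⧸ A) n := by
  intro k
  induction k with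
  | zero =>
    intro A hA
    have hA' : A = ⊤ := top_unique (by simpa using hA)
    subst hA'
    exact ⟨0, mChB_top_zero⟩
  | succ k ih =>
    intro A hA
    set B := maximalIdeal R ^ k ⊔ A with hB
    obtain ⟨n1, h1⟩ := ih B le_sup_left
    set N : Submodule R (R ⧸ A) := Submodule.map A.mkQ B with hN
    have hq : mChB R ((R ⧸ A) ⧸ N) n1 :=
      mChB_of_linearEquiv (Submodule.quotientQuotientEquivQuotient A B le_sup_right).symm h1
    have hNfg : (⊤ : Submodule R ↥N).FG := (Submodule.fg_top _).mpr (IsNoetherian.noetherian N)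
    have hkill : ∀ r ∈ maximalIdeal R, ∀ y : ↥N, r • y = 0 := by
      rintro r hr ⟨y, hy⟩
      obtain ⟨z, hzB, rfl⟩ := hy
      refine Subtype.ext ?_
      show r • (A.mkQ z) = 0
      rw [← map_smul]
      refine (Submodule.Quotient.mk_eq_zero A).mpr ?_
      obtain ⟨u, hu, a, ha, rfl⟩ := Submodule.mem_sup.mp hzB
      have h1 : r • u ∈ maximalIdeal R ^ (k + 1) := by
        rw [pow_succ, smul_eq_mul, mul_comm r u]
        exact Ideal.mul_mem_mul hu hr
      have h2 : r • (u + a) = r • u + r • a := smul_add r u a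
      rw [h2]
      exact Ideal.add_mem A (hA h1) (Ideal.mul_mem_left A r ha)
    obtain ⟨n2, h2⟩ := mChB_of_fg_killed hNfg hkill
    exact ⟨n2 + n1, mChB_subadd N h2 hq⟩

/-- chains of primes over `A` have length at most `d` -/
def PrimeBnd (A : Ideal R) (d : ℕ) : Prop :=
  ∀ l : LTSeries (PrimeSpectrum R), A ≤ l.head.asIdeal → l.length ≤ d

lemma const_case {A : Ideal R} (hm : maximalIdeal R ∈ A.minimalPrimes) :
    ∃ C : ℕ, ∀ n : ℕ, qlen ((maximalIdeal R) ^ n ⊔ A) ≤ C := by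
  have hrad : maximalIdeal R ≤ A.radical := by
    rw [Ideal.radical_eq_sInf]
    refine le_sInf fun J hJ => ?_
    haveI : J.IsPrime := hJ.2
    obtain ⟨Q, hQ, hQJ⟩ := Ideal.exists_minimalPrimes_le hJ.1
    have hQm : Q ≤ maximalIdeal R := le_maximalIdeal hQ.1.1.ne_top
    exact le_trans (hm.2 hQ.1 hQm) hQJ
  obtain ⟨k, hk⟩ := Ideal.exists_pow_le_of_le_radical_of_fg hrad (IsNoetherian.noetherian _)
  obtain ⟨n0, h0⟩ := finLen_of_pow_le k A hk
  exact ⟨qlen A, fun n => qlen_mono le_sup_right h0⟩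

lemma hs_growth :
    ∀ (d : ℕ) (A : Ideal R), PrimeBnd A d →
      ∃ C : ℕ, ∀ n : ℕ, qlen ((maximalIdeal R) ^ n ⊔ A) ≤ C * (n + 1) ^ d := by
  intro d
  induction d with
  | zero =>
    intro A hbnd
    by_cases hA : A = ⊤
    · subst hA
      exact ⟨0, fun n => by simpa [qlen_top] using le_of_eq (by rw [sup_top_eq, qlen_top]; ring)⟩
    have hmA : A ≤ maximalIdeal R := le_maximalIdeal hA
    obtain ⟨Q, hQ, hQm⟩ := Ideal.exists_minimalPrimes_le hmA
    by_cases hQeq : Q = maximalIdeal R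
    · subst hQeq
      obtain ⟨C, hC⟩ := const_case hQ
      exact ⟨C, fun n => by simpa using hC n⟩
    · exfalso
      haveI hQp : Q.IsPrime := hQ.1.1
      set x : PrimeSpectrum R := ⟨Q, hQp⟩
      set y : PrimeSpectrum R := ⟨maximalIdeal R, inferInstance⟩
      have hxy : x < y := by
        rw [lt_iff_le_and_ne]
        exact ⟨hQm, fun h => hQeq (congrArg PrimeSpectrum.asIdeal h)⟩
      have := hbnd ((RelSeries.singleton _ y).cons x hxy) (by exact hQ.1.2)
      exact Nat.not_succ_le_zero _ this
  | succ d ih =>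
    intro A hbnd
    by_cases hA : A = ⊤
    · subst hA
      exact ⟨0, fun n => by rw [sup_top_eq, qlen_top]; positivity⟩
    by_cases hm : ∃ P ∈ A.minimalPrimes, maximalIdeal R ≤ P
    · obtain ⟨P, hP, hPm⟩ := hm
      have hPm' : P = maximalIdeal R := le_antisymm (le_maximalIdeal hP.1.1.ne_top) hPm
      subst hPm'
      obtain ⟨C, hC⟩ := const_case hP
      exact ⟨C, fun n => le_trans (hC n) (Nat.le_mul_of_pos_right C (by positivity))⟩
    · -- prime avoidance
      have hfin : A.minimalPrimes.Finite := by
        rw [Ideal.minimalPrimes_eq_comap]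
        exact Set.Finite.image _ (minimalPrimes.finite_of_isNoetherianRing (R ⧸ A))
      have key := (Ideal.subset_union_prime (s := hfin.toFinset) (f := id) ⊤ ⊤
        (fun P hP _ _ => (hfin.mem_toFinset.mp hP).1.1) (I := maximalIdeal R))
      have hnot : ¬ ∃ i ∈ hfin.toFinset, maximalIdeal R ≤ id i := by
        push_neg
        intro P hP
        exact fun hle => hm ⟨P, hfin.mem_toFinset.mp hP, hle⟩
      have havoid := key.not.mpr hnot
      obtain ⟨z, hzm, hz⟩ : ∃ z ∈ maximalIdeal R, ∀ P ∈ A.minimalPrimes, z ∉ P := by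
        rw [Set.not_subset] at havoid
        obtain ⟨z, hz1, hz2⟩ := havoid
        refine ⟨z, hz1, fun P hP hzP => hz2 ?_⟩
        rw [Set.mem_iUnion₂]
        exact ⟨P, hfin.mem_toFinset.mpr hP, hzP⟩
      set A' := A ⊔ Ideal.span {z} with hA'
      have hbnd' : PrimeBnd A' d := by
        intro l hl
        obtain ⟨Q, hQ, hQl⟩ := Ideal.exists_minimalPrimes_le (le_trans le_sup_left hl)
        haveI hQp : Q.IsPrime := hQ.1.1
        have hzhead : z ∈ l.head.asIdeal :=
          hl (Ideal.mem_sup_right (Ideal.subset_span rfl))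
        have hlt : (⟨Q, hQp⟩ : PrimeSpectrum R) < l.head := by
          rw [lt_iff_le_and_ne]
          refine ⟨hQl, fun h => hz Q hQ ?_⟩
          rw [show Q = l.head.asIdeal from congrArg PrimeSpectrum.asIdeal h]
          exact hzhead
        have := hbnd (l.cons ⟨Q, hQp⟩ hlt) (by simpa using hQ.1.2)
        simpa [RelSeries.cons_length] using this
      obtain ⟨C, hC⟩ := ih A' hbnd'
      -- recurrence
      have hrec : ∀ n : ℕ, qlen (maximalIdeal R ^ (n + 1) ⊔ A) ≤
          qlen (maximalIdeal R ^ n ⊔ A) + C * (n + 2) ^ d := by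
        intro n
        set J := maximalIdeal R ^ (n + 1) ⊔ A with hJ
        obtain ⟨nn, hfinJ⟩ := finLen_of_pow_le (n + 1) J le_sup_left
        have hsplit := qlen_colon_split J z hfinJ
        have hsup : J ⊔ Ideal.span {z} = maximalIdeal R ^ (n + 1) ⊔ A' := by
          rw [hJ, hA', sup_assoc]
        have hcol : maximalIdeal R ^ n ⊔ A ≤ colonC J z := by
          refine sup_le ?_ ?_
          · intro w hw
            refine mem_colonC.mpr (Ideal.mem_sup_left ?_)
            rw [pow_succ]
            exact Ideal.mul_mem_mul hw hzm
          · intro w hw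
            exact mem_colonC.mpr (Ideal.mem_sup_right (Ideal.mul_mem_right z A hw))
        obtain ⟨nn2, hfin2⟩ := finLen_of_pow_le n _ (le_sup_left :
          maximalIdeal R ^ n ≤ maximalIdeal R ^ n ⊔ A)
        have h1 : qlen (colonC J z) ≤ qlen (maximalIdeal R ^ n ⊔ A) := qlen_mono hcol hfin2
        have h2 : qlen (J ⊔ Ideal.span {z}) ≤ C * (n + 2) ^ d := by
          rw [hsup]
          simpa [Nat.add_assoc] using hC (n + 1)
        omega
      have hind : ∀ n : ℕ, qlen (maximalIdeal R ^ n ⊔ A) ≤ C * n * (n + 1) ^ d := by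
        intro n
        induction n with
        | zero => simp [Ideal.one_eq_top, qlen_top]
        | succ n ihn =>
          refine le_trans (hrec n) ?_
          have e1 : C * n * (n + 1) ^ d ≤ C * n * (n + 2) ^ d := by
            have := Nat.pow_le_pow_left (show n + 1 ≤ n + 2 by omega) d
            exact Nat.mul_le_mul_left _ this
          calc qlen (maximalIdeal R ^ n ⊔ A) + C * (n + 2) ^ d
              ≤ C * n * (n + 2) ^ d + C * (n + 2) ^ d := by omega
            _ = C * (n + 1) * (n + 2) ^ d := by ring
      refine ⟨C, fun n => le_trans (hind n) ?_⟩
      calc C * n * (n + 1) ^ d ≤ C * (n + 1) * (n + 1) ^ d := by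
            have : n ≤ n + 1 := by omega
            exact Nat.mul_le_mul_right _ (Nat.mul_le_mul_left _ this)
        _ = C * (n + 1) ^ (d + 1) := by ring

end Fin

section FpowAlg

variable {R : Type*} [CommRing R]

lemma fpow_one (I : Ideal R) : fpow I 1 = I := by
  simp [fpow, pow_one, Ideal.span_eq]

lemma fpow_mono {I J : Ideal R} (h : I ≤ J) (q : ℕ) : fpow I q ≤ fpow J q :=
  Ideal.span_mono (Set.image_mono h)

lemma mem_fpow_pow {I : Ideal R} {x : R} (hx : x ∈ I) (q : ℕ) : x ^ q ∈ fpow I q :=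
  Ideal.subset_span ⟨x, hx, rfl⟩

lemma fpow_mul_le (A B : Ideal R) (q : ℕ) : fpow A q * fpow B q ≤ fpow (A * B) q := by
  rw [fpow, fpow, Ideal.span_mul_span']
  refine Ideal.span_le.mpr ?_
  rintro y ⟨s, ⟨a, ha, rfl⟩, t, ⟨b, hb, rfl⟩, rfl⟩
  simpa [← mul_pow] using mem_fpow_pow (Ideal.mul_mem_mul ha hb) q

lemma fpow_pow_le (A : Ideal R) (q : ℕ) : ∀ s : ℕ, (fpow A q) ^ s ≤ fpow (A ^ s) q := by
  intro s
  induction s with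
  | zero =>
    rw [pow_zero, pow_zero, Ideal.one_eq_top]
    refine top_le_iff.mpr ((Ideal.eq_top_iff_one _).mpr ?_)
    simpa using mem_fpow_pow (I := (⊤ : Ideal R)) (x := 1) trivial q
  | succ s ih =>
    rw [pow_succ, pow_succ]
    exact le_trans (Ideal.mul_mono ih le_rfl) (fpow_mul_le _ _ q)

lemma pigeonhole_pow (S : Finset R) {q n : ℕ} (hq : 1 ≤ q) (hn : S.card * (q - 1) < n) :
    (Ideal.span (S : Set R)) ^ n ≤ fpow (Ideal.span (S : Set R)) q := by
  rw [Ideal.span, Submodule.span_pow]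
  refine Submodule.span_le.mpr ?_
  intro y hy
  obtain ⟨f, hf⟩ := Set.mem_pow.mp hy
  classical
  set g : Fin n → R := fun i => (f i : R) with hg
  have hgS : ∀ i, g i ∈ S := fun i => (f i).2
  have hcard : (Finset.univ : Finset (Fin n)).card =
      ∑ b ∈ S, (Finset.univ.filter (fun i => g i = b)).card :=
    Finset.card_eq_sum_card_fiberwise fun i _ => hgS i
  have hex : ∃ a ∈ S, q ≤ (Finset.univ.filter (fun i => g i = a)).card := by
    by_contra hcon
    push_neg at hcon
    have hsum := Finset.sum_le_card_nsmul S (fun b => (Finset.univ.filter (fun i => g i = b)).card)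
      (q - 1) (fun b hb => by
        show (Finset.univ.filter (fun i => g i = b)).card ≤ q - 1
        have := hcon b hb; omega)
    simp only [smul_eq_mul] at hsum
    simp only [Finset.card_univ, Fintype.card_fin] at hcard
    omega
  obtain ⟨a, haS, haq⟩ := hex
  have hy' : y = ∏ i : Fin n, g i := by
    rw [← hf, ← List.prod_ofFn]
  set T := Finset.univ.filter (fun i => g i = a) with hT
  have hsplit : ∏ i : Fin n, g i = (∏ i ∈ T, g i) * ∏ i ∈ Finset.univ.filter (fun i => ¬ g i = a), g i :=
    (Finset.prod_filter_mul_prod_filter_not Finset.univ _ g).symm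
  have hTa : ∏ i ∈ T, g i = a ^ T.card :=
    Finset.prod_eq_pow_card (fun i hi => (Finset.mem_filter.mp hi).2)
  have haqmem : a ^ q ∈ fpow (Ideal.span (S : Set R)) q :=
    mem_fpow_pow (Ideal.subset_span haS) q
  have hdecomp : y = a ^ q * (a ^ (T.card - q) *
      ∏ i ∈ Finset.univ.filter (fun i => ¬ g i = a), g i) := by
    rw [hy', hsplit, hTa, ← mul_assoc, ← pow_add]
    congr 2
    omega
  rw [hdecomp]
  exact Ideal.mul_mem_right _ _ haqmem

lemma prod_mem_primary {m I : Ideal R} (S : Finset R) (hS : Ideal.span (S : Set R) = m)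
    {s : ℕ} (hs : m ^ s ≤ I) {q : ℕ} (hq : 1 ≤ q) :
    m ^ (s * (S.card * (q - 1) + 1)) ≤ fpow I q := by
  have h1 : m ^ (s * (S.card * (q - 1) + 1)) = (m ^ (S.card * (q - 1) + 1)) ^ s := by
    rw [← pow_mul]
    ring_nf
  rw [h1]
  have h2 : m ^ (S.card * (q - 1) + 1) ≤ fpow m q := by
    rw [← hS]
    exact pigeonhole_pow S hq (by omega)
  calc (m ^ (S.card * (q - 1) + 1)) ^ s ≤ (fpow m q) ^ s := Ideal.pow_right_mono h2 s
    _ ≤ fpow (m ^ s) q := fpow_pow_le m q s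
    _ ≤ fpow I q := fpow_mono hs q

end FpowAlg


section DimLemmas

variable {R : Type*} [CommRing R] [IsNoetherianRing R] [IsLocalRing R]

lemma primeBnd_span_c {c : R} {d' : ℕ}
    (hd : ringKrullDim R = ((d' + 1 : ℕ) : WithBot ℕ∞))
    (hc1 : ∀ P ∈ minimalPrimes R, c ∉ P) :
    PrimeBnd (Ideal.span {c}) d' := by
  intro l hl
  obtain ⟨Q, hQ, hQl⟩ := Ideal.exists_minimalPrimes_le (bot_le : ⊥ ≤ l.head.asIdeal)
  haveI hQp : Q.IsPrime := hQ.1.1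
  have hcQ : c ∉ Q := hc1 Q hQ
  have hchead : c ∈ l.head.asIdeal := hl (Ideal.subset_span rfl)
  have hlt : (⟨Q, hQp⟩ : PrimeSpectrum R) < l.head := by
    rw [lt_iff_le_and_ne]
    refine ⟨hQl, fun h => hcQ ?_⟩
    rw [show Q = l.head.asIdeal from congrArg PrimeSpectrum.asIdeal h]
    exact hchead
  have hlen := Order.LTSeries.length_le_krullDim (l.cons ⟨Q, hQp⟩ hlt)
  rw [show Order.krullDim (PrimeSpectrum R) = ringKrullDim R from rfl, hd] at hlen
  have hlen' : (l.cons ⟨Q, hQp⟩ hlt).length ≤ d' + 1 := by exact_mod_cast hlen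
  simp [RelSeries.cons_length] at hlen'
  omega

lemma isUnit_of_dim_zero (hd : ringKrullDim R = ((0 : ℕ) : WithBot ℕ∞))
    {c : R} (hc1 : ∀ P ∈ minimalPrimes R, c ∉ P) : IsUnit c := by
  obtain ⟨Q, hQ, hQm⟩ :=
    Ideal.exists_minimalPrimes_le (bot_le : (⊥ : Ideal R) ≤ maximalIdeal R)
  haveI hQp : Q.IsPrime := hQ.1.1
  have hQeq : Q = maximalIdeal R := by
    by_contra hne
    have hlt : (⟨Q, hQp⟩ : PrimeSpectrum R) < ⟨maximalIdeal R, inferInstance⟩ := by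
      rw [lt_iff_le_and_ne]
      exact ⟨hQm, fun h => hne (congrArg PrimeSpectrum.asIdeal h)⟩
    have hlen := Order.LTSeries.length_le_krullDim
      ((RelSeries.singleton _ (⟨maximalIdeal R, inferInstance⟩ : PrimeSpectrum R)).cons _ hlt)
    rw [show Order.krullDim (PrimeSpectrum R) = ringKrullDim R from rfl, hd] at hlen
    have hlen' : ((RelSeries.singleton {x : PrimeSpectrum R × PrimeSpectrum R | x.1 < x.2} _).cons _ hlt).length ≤ 0 := by exact_mod_cast hlen
    exact Nat.not_succ_le_zero _ hlen'
  have hcm : c ∉ maximalIdeal R := hQeq ▸ hc1 Q hQ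
  by_contra hnc
  exact hcm ((mem_maximalIdeal c).mpr hnc)

end DimLemmas

lemma arith1 (t q : ℕ) (hq : 1 ≤ q) : t * (q - 1) + 1 ≤ (t + 1) * q := by
  obtain ⟨q', rfl⟩ : ∃ q', q = q' + 1 := ⟨q - 1, by omega⟩
  have h : t * (q' + 1 - 1) = t * q' := by norm_num
  rw [h]
  nlinarith

/-- Any family of ideals squeezed between the Frobenius powers and
their tight closures computes the Hilbert–Kunz multiplicity. -/
theorem stmt9 {R : Type*} [CommRing R] [IsNoetherianRing R] [IsLocalRing R]
    (p : ℕ) (hp : p.Prime) [CharP R p] (c : R) (hc : IsTestElement p c)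
    (d : ℕ) (hd : ringKrullDim R = d)
    (I : Ideal R) (hI : I.radical = maximalIdeal R)
    (Iq : ℕ → Ideal R)
    (h1 : ∀ e : ℕ, fpow I (p ^ e) ≤ Iq e)
    (h2 : ∀ e : ℕ, Iq e ≤ tightClosure p (fpow I (p ^ e)))
    (eHK : ℝ)
    (hHK : Filter.Tendsto (fun e : ℕ => (qlen (fpow I (p ^ e)) : ℝ) / (p : ℝ) ^ (d * e))
      Filter.atTop (nhds eHK)) :
    Filter.Tendsto (fun e : ℕ => (qlen (Iq e) : ℝ) / (p : ℝ) ^ (d * e))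
      Filter.atTop (nhds eHK) := by
  -- setup: m-primary data
  have hrad : maximalIdeal R ≤ I.radical := le_of_eq hI.symm
  obtain ⟨s0, hs0⟩ := Ideal.exists_pow_le_of_le_radical_of_fg hrad (IsNoetherian.noetherian _)
  have hs : maximalIdeal R ^ (s0 + 1) ≤ I := by
    refine le_trans ?_ hs0
    rw [pow_succ]
    exact (Ideal.mul_mono le_rfl le_top).trans (by rw [Ideal.mul_top])
  set s : ℕ := s0 + 1 with hsdef
  obtain ⟨S, hS⟩ := IsNoetherian.noetherian (maximalIdeal R)
  set t : ℕ := S.card with htdef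
  -- the membership consequence of the test element
  have hcIq : ∀ e : ℕ, ∀ x ∈ Iq e, x * c ∈ fpow I (p ^ e) := by
    intro e x hx
    have hx0 := (hc.2 (fpow I (p ^ e)) x).mp (h2 e hx) 0
    rw [pow_zero, pow_one, fpow_one] at hx0
    rwa [mul_comm]
  have hIqcol : ∀ e : ℕ, Iq e ≤ colonC (fpow I (p ^ e)) c := fun e x hx =>
    mem_colonC.mpr (hcIq e x hx)
  -- Frobenius power contains a fixed power of the maximal ideal
  have hq1 : ∀ e : ℕ, 1 ≤ p ^ e := fun e => Nat.one_le_pow e p hp.pos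
  have hNe : ∀ e : ℕ, maximalIdeal R ^ (s * (t * (p ^ e - 1) + 1)) ≤ fpow I (p ^ e) :=
    fun e => prod_mem_primary S hS hs (hq1 e)
  have hfinJ : ∀ e : ℕ, ∃ n, mChB R (R ⧸ (fpow I (p ^ e))) n :=
    fun e => finLen_of_pow_le _ _ (hNe e)
  have hfinIq : ∀ e : ℕ, ∃ n, mChB R (R ⧸ (Iq e)) n :=
    fun e => finLen_of_pow_le _ _ (le_trans (hNe e) (h1 e))
  have hmono : ∀ e : ℕ, qlen (Iq e) ≤ qlen (fpow I (p ^ e)) := by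
    intro e
    obtain ⟨n, hn⟩ := hfinJ e
    exact qlen_mono (h1 e) hn
  rcases Nat.eq_zero_or_pos d with hd0 | hdpos
  · -- dimension 0 : c is a unit and the lengths agree
    subst hd0
    have hcu : IsUnit c := isUnit_of_dim_zero (by exact_mod_cast hd) hc.1
    have hqeq : ∀ e : ℕ, qlen (Iq e) = qlen (fpow I (p ^ e)) := by
      intro e
      refine le_antisymm (hmono e) ?_
      have hcol : colonC (fpow I (p ^ e)) c ≤ fpow I (p ^ e) := by
        intro x hx
        obtain ⟨w, rfl⟩ := hcu
        have h3 := Ideal.mul_mem_right ((w⁻¹ : Rˣ) : R) _ (mem_colonC.mp hx)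
        rwa [mul_assoc, Units.mul_inv, mul_one] at h3
      obtain ⟨n, hn⟩ := hfinIq e
      have h4 : qlen (colonC (fpow I (p ^ e)) c) ≤ qlen (Iq e) := qlen_mono (hIqcol e) hn
      obtain ⟨n2, hn2⟩ := hfinJ e
      have h5 : qlen (fpow I (p ^ e)) ≤ qlen (colonC (fpow I (p ^ e)) c) := by
        have := qlen_mono hcol (mChB_mono le_colonC hn2)
        exact this
      omega
    have hfun : (fun e : ℕ => (qlen (Iq e) : ℝ) / (p : ℝ) ^ (0 * e)) =
        (fun e : ℕ => (qlen (fpow I (p ^ e)) : ℝ) / (p : ℝ) ^ (0 * e)) :=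
      funext fun e => by rw [hqeq e]
    rw [hfun]
    exact hHK
  · -- positive dimension
    obtain ⟨d', rfl⟩ : ∃ d', d = d' + 1 := ⟨d - 1, by omega⟩
    obtain ⟨C, hC⟩ := hs_growth d' (Ideal.span {c})
      (primeBnd_span_c (by exact_mod_cast hd) hc.1)
    set u : ℕ := s * (t + 1) with hudef
    have hu1 : 1 ≤ u := Nat.mul_pos (by omega) (by omega)
    set K : ℕ := C * (2 * u) ^ d' with hKdef
    -- the key length estimate
    have hkey : ∀ e : ℕ, qlen (fpow I (p ^ e)) ≤ qlen (Iq e) + K * (p ^ e) ^ d' := by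
      intro e
      have hqe : 1 ≤ p ^ e := hq1 e
      set Ne : ℕ := s * (t * (p ^ e - 1) + 1) with hNedef
      obtain ⟨n, hn⟩ := hfinJ e
      have hsplit := qlen_colon_split (fpow I (p ^ e)) c hn
      obtain ⟨nIq, hnIq⟩ := hfinIq e
      have hcolIq : qlen (colonC (fpow I (p ^ e)) c) ≤ qlen (Iq e) :=
        qlen_mono (hIqcol e) hnIq
      obtain ⟨nm, hnm⟩ := finLen_of_pow_le Ne (maximalIdeal R ^ Ne ⊔ Ideal.span {c}) le_sup_left
      have hsupmono : maximalIdeal R ^ Ne ⊔ Ideal.span {c} ≤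
          fpow I (p ^ e) ⊔ Ideal.span {c} := sup_le_sup_right (hNe e) _
      have hsup1 : qlen (fpow I (p ^ e) ⊔ Ideal.span {c}) ≤
          qlen (maximalIdeal R ^ Ne ⊔ Ideal.span {c}) := qlen_mono hsupmono hnm
      have hsup2 : qlen (maximalIdeal R ^ Ne ⊔ Ideal.span {c}) ≤ C * (Ne + 1) ^ d' := hC Ne
      have hNele : Ne + 1 ≤ 2 * u * (p ^ e) := by
        have h1' : t * (p ^ e - 1) + 1 ≤ (t + 1) * (p ^ e) := arith1 t _ hqe
        have h2' : Ne ≤ u * (p ^ e) := by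
          rw [hNedef, hudef, mul_assoc]
          exact Nat.mul_le_mul_left s h1'
        have h3' : 1 ≤ u * (p ^ e) := Nat.mul_pos (by omega) hqe
        have h4' : 2 * u * (p ^ e) = 2 * (u * (p ^ e)) := by ring
        omega
      have hpowle : (Ne + 1) ^ d' ≤ (2 * u * (p ^ e)) ^ d' := Nat.pow_le_pow_left hNele d'
      have hfinal : C * (Ne + 1) ^ d' ≤ K * (p ^ e) ^ d' := by
        rw [hKdef]
        calc C * (Ne + 1) ^ d' ≤ C * (2 * u * (p ^ e)) ^ d' := Nat.mul_le_mul_left C hpowle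
          _ = C * (2 * u) ^ d' * (p ^ e) ^ d' := by rw [mul_pow]; ring
      calc qlen (fpow I (p ^ e))
          ≤ qlen (colonC (fpow I (p ^ e)) c) + qlen (fpow I (p ^ e) ⊔ Ideal.span {c}) := hsplit
        _ ≤ qlen (Iq e) + C * (Ne + 1) ^ d' := add_le_add hcolIq (le_trans hsup1 hsup2)
        _ ≤ qlen (Iq e) + K * (p ^ e) ^ d' := add_le_add_right hfinal _
    -- pass to the real numbers
    have hppos : (0 : ℝ) < (p : ℝ) := by exact_mod_cast hp.pos
    have hpinv1 : (p : ℝ)⁻¹ < 1 := by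
      rw [inv_lt_one_iff₀]
      right
      exact_mod_cast hp.one_lt
    set D : ℕ → ℝ := fun e =>
      ((qlen (fpow I (p ^ e)) : ℝ) - (qlen (Iq e) : ℝ)) / (p : ℝ) ^ ((d' + 1) * e) with hDdef
    have hD0 : ∀ e, 0 ≤ D e := by
      intro e
      apply div_nonneg
      · have := hmono e
        have h' : (qlen (Iq e) : ℝ) ≤ (qlen (fpow I (p ^ e)) : ℝ) := by exact_mod_cast this
        linarith
      · positivity
    have hDle : ∀ e, D e ≤ (K : ℝ) * ((p : ℝ)⁻¹) ^ e := by
      intro e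
      have hnum : (qlen (fpow I (p ^ e)) : ℝ) - (qlen (Iq e) : ℝ) ≤
          (K : ℝ) * (p : ℝ) ^ (d' * e) := by
        have := hkey e
        have hcast : (qlen (fpow I (p ^ e)) : ℝ) ≤
            (qlen (Iq e) : ℝ) + (K : ℝ) * ((p : ℝ) ^ e) ^ d' := by exact_mod_cast this
        rw [← pow_mul, mul_comm e d'] at hcast
        linarith
      have hden : (p : ℝ) ^ ((d' + 1) * e) = (p : ℝ) ^ (d' * e) * (p : ℝ) ^ e := by
        rw [← pow_add]
        congr 1
        ring
      rw [hDdef]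
      simp only
      rw [div_le_iff₀ (by positivity)]
      calc (qlen (fpow I (p ^ e)) : ℝ) - (qlen (Iq e) : ℝ)
          ≤ (K : ℝ) * (p : ℝ) ^ (d' * e) := hnum
        _ = (K : ℝ) * ((p : ℝ)⁻¹) ^ e * ((p : ℝ) ^ (d' * e) * (p : ℝ) ^ e) := by
            rw [inv_pow]
            field_simp
        _ = (K : ℝ) * ((p : ℝ)⁻¹) ^ e * (p : ℝ) ^ ((d' + 1) * e) := by rw [hden]
    have hgeo : Filter.Tendsto (fun e : ℕ => (K : ℝ) * ((p : ℝ)⁻¹) ^ e)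
        Filter.atTop (nhds 0) := by
      have := (tendsto_pow_atTop_nhds_zero_of_lt_one (by positivity) hpinv1).const_mul (K : ℝ)
      simpa using this
    have hDlim : Filter.Tendsto D Filter.atTop (nhds 0) := squeeze_zero hD0 hDle hgeo
    have hconv := hHK.sub hDlim
    rw [sub_zero] at hconv
    have hfun : (fun e : ℕ => (qlen (fpow I (p ^ e)) : ℝ) / (p : ℝ) ^ ((d' + 1) * e) - D e) =
        (fun e : ℕ => (qlen (Iq e) : ℝ) / (p : ℝ) ^ ((d' + 1) * e)) := by
      funext e
      rw [hDdef]
      simp only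
      rw [div_sub_div_same]
      congr 1
      ring
    rwa [hfun] at hconv
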